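/- Let N ≥ 2, let (τ_i)_{i=1}^N be a contractive IFS on a nonempty complete metric space Y, let Ω = {1,…,N}^ℕ with the infinite-product Bernoulli(1/N) probability measure P, let σ_i be the prepending shifts, and let π : Ω → Y be a continuous map satisfying π∘σ_i = τ_i∘π for all i (the encoding map). Let μ = P∘π^{-1} on Y, so that μ = (1/N)∑_i μ∘τ_i^{-1}. Define F_i : L²(Y,μ) → L²(Y,μ) by F_i f = (1/√N) f∘τ_i, define T_i : L²(Ω,P) → L²(Ω,P) by T_i ψ = (1/√N) ψ∘σ_i, let S_i = T_i* (the Hilbert adjoint), and define V : L²(Y,μ) → L²(Ω,P) by Vf = f∘π. Then: (a) V is isometric, i.e. ∫_Ω |f∘π|² dP = ∫_Y |f|² dμ for all f ∈ L²(μ); (b) V F_i = T_i V for each i (the intertwining relations V F_i = S_i* V); (c) the extension is minimal: the closed linear span of ⋃_{n≥0} ⋃_{(i₁,…,i_n) ∈ {1,…,N}^n} S_{i₁} S_{i₂} ⋯ S_{i_n} ( V(L²(Y,μ)) ) equals all of L²(Ω,P). -/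

import Mathlib

open MeasureTheory ENNReal ContinuousLinearMap

/-- The prepending shift `σ_j` on infinite words: `σ_j(ω₁ω₂…) = (j ω₁ ω₂ …)`. -/
def prependShift {N : ℕ} (j : Fin N) (ω : ℕ → Fin N) : ℕ → Fin N :=
  fun n => Nat.casesOn n j fun k => ω k

namespace Stmt19Aux

variable {N : ℕ}

def cylL (m : List (Fin N)) : Set (ℕ → Fin N) :=
  {ω | ∀ k : Fin m.length, ω k = m.get k}

lemma measurable_prependShift (j : Fin N) : Measurable (prependShift j) := by
  rw [measurable_pi_iff]
  intro n
  cases n with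
  | zero => exact measurable_const
  | succ k => exact measurable_pi_apply k

lemma cylL_nil : cylL ([] : List (Fin N)) = Set.univ := by
  ext ω; simp [cylL]

lemma mem_cylL_cons {a : Fin N} {m : List (Fin N)} {ω : ℕ → Fin N} :
    ω ∈ cylL (a :: m) ↔ ω 0 = a ∧ (fun k => ω (k + 1)) ∈ cylL m := by
  constructor
  · intro h
    exact ⟨h ⟨0, Nat.succ_pos _⟩, fun k => h k.succ⟩
  · intro ⟨h0, h1⟩ k
    rcases k with ⟨kk, hk⟩
    cases kk with
    | zero => exact h0
    | succ k' => exact h1 ⟨k', Nat.lt_of_succ_lt_succ hk⟩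

lemma preimage_prependShift_cylL_cons (j a : Fin N) (m : List (Fin N)) :
    prependShift j ⁻¹' cylL (a :: m) = if a = j then cylL m else ∅ := by
  ext ω
  have : prependShift j ω ∈ cylL (a :: m) ↔ j = a ∧ ω ∈ cylL m := by
    rw [mem_cylL_cons]
    exact and_congr Iff.rfl Iff.rfl
  rw [Set.mem_preimage, this]
  split_ifs with h
  · subst h; simp
  · simp only [Set.mem_empty_iff_false, iff_false, not_and]
    intro hja
    exact absurd hja.symm h

lemma preimage_prependShift_cylL_nil (j : Fin N) :
    prependShift j ⁻¹' cylL ([] : List (Fin N)) = Set.univ := by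
  simp [cylL_nil]

lemma measurableSet_cylL (m : List (Fin N)) : MeasurableSet (cylL m) := by
  have : cylL m = ⋂ k : Fin m.length, (fun ω : ℕ → Fin N => ω k) ⁻¹' {m.get k} := by
    ext ω; simp [cylL]
  rw [this]
  exact MeasurableSet.iInter fun k => (measurable_pi_apply _) (MeasurableSet.singleton _)

def cylC (N : ℕ) : Set (Set (ℕ → Fin N)) := {s | ∃ m : List (Fin N), s = cylL m}

lemma isPiSystem_cylC : IsPiSystem (cylC N) := by
  rintro s ⟨m, rfl⟩ t ⟨m', rfl⟩ hne
  obtain ⟨ω, hω, hω'⟩ := hne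
  rcases le_total m.length m'.length with h | h
  · refine ⟨m', ?_⟩
    have hsub : cylL m' ⊆ cylL m := by
      intro x hx k
      have h1 : (k : ℕ) < m'.length := lt_of_lt_of_le k.2 h
      rw [hx ⟨k, h1⟩]
      have e1 := hω k
      have e2 := hω' ⟨k, h1⟩
      simp only at e1 e2
      rw [← e1, e2]
    rw [Set.inter_eq_right.mpr hsub]
  · refine ⟨m, ?_⟩
    have hsub : cylL m ⊆ cylL m' := by
      intro x hx k
      have h1 : (k : ℕ) < m.length := lt_of_lt_of_le k.2 h
      rw [hx ⟨k, h1⟩]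
      have e1 := hω' k
      have e2 := hω ⟨k, h1⟩
      simp only at e1 e2
      rw [← e1, e2]
    rw [Set.inter_eq_left.mpr hsub]

lemma eval_preimage (n : ℕ) (j : Fin N) :
    {ω : ℕ → Fin N | ω n = j} =
      ⋃ (m : List (Fin N)) (_ : m.length = n), cylL (m ++ [j]) := by
  ext ω
  simp only [Set.mem_setOf_eq, Set.mem_iUnion]
  constructor
  · intro h
    refine ⟨List.ofFn (fun k : Fin n => ω k), by simp, ?_⟩
    intro k
    have hk : (k : ℕ) < n + 1 := by simpa using k.2
    rcases Nat.lt_or_ge (k : ℕ) n with hlt | hge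
    · have : ((List.ofFn fun k : Fin n => ω k) ++ [j]).get k
          = (List.ofFn fun k : Fin n => ω k).get ⟨k, by simpa using hlt⟩ := by
        simp [List.getElem_append, hlt]
      rw [this]; simp
    · have hkn : (k : ℕ) = n := le_antisymm (Nat.lt_succ_iff.mp hk) hge
      have : ((List.ofFn fun k : Fin n => ω k) ++ [j]).get k = j := by
        simp [List.getElem_append, hkn]
      rw [this, hkn, h]
  · rintro ⟨m, hm, hmem⟩
    have hn : n < (m ++ [j]).length := by simp [hm]
    have := hmem ⟨n, hn⟩
    simp only [List.get_eq_getElem] at this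
    rw [this]
    subst hm
    simp

lemma generateFrom_cylC :
    (MeasurableSpace.pi : MeasurableSpace (ℕ → Fin N)) = MeasurableSpace.generateFrom (cylC N) := by
  apply le_antisymm
  · rw [MeasurableSpace.pi]
    refine iSup_le fun n => ?_
    have hm : Measurable[MeasurableSpace.generateFrom (cylC N)] (fun ω : ℕ → Fin N => ω n) := by
      refine @measurable_to_countable' (Fin N) _ _ _ (MeasurableSpace.generateFrom (cylC N)) _ (fun j => ?_)
      have : (fun ω : ℕ → Fin N => ω n) ⁻¹' {j} = {ω : ℕ → Fin N | ω n = j} := by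
        ext ω; simp
      rw [this, eval_preimage]
      exact MeasurableSet.iUnion fun m => MeasurableSet.iUnion fun _ =>
        MeasurableSpace.measurableSet_generateFrom ⟨m ++ [j], rfl⟩
    exact measurable_iff_comap_le.mp hm
  · rw [MeasurableSpace.generateFrom_le_iff]
    rintro s ⟨m, rfl⟩
    exact measurableSet_cylL m


lemma cylL_cons_inter (a j : Fin N) (m : List (Fin N)) :
    cylL (a :: m) ∩ cylL [j] = if a = j then cylL (a :: m) else ∅ := by
  ext ω
  simp only [Set.mem_inter_iff, mem_cylL_cons]
  split_ifs with h
  · subst h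
    simp only [mem_cylL_cons]
    constructor
    · exact fun hh => hh.1
    · intro hh
      exact ⟨hh, hh.1, fun k => k.elim0⟩
  · constructor
    · rintro ⟨⟨h1, -⟩, h2, -⟩
      exact absurd (h1.symm.trans h2) h
    · intro hh
      exact absurd hh (Set.notMem_empty ω)

section Measures

def prependList (m : List (Fin N)) (ω : ℕ → Fin N) : ℕ → Fin N := m.foldr prependShift ω

lemma measurable_prependList (m : List (Fin N)) : Measurable (prependList m) := by
  induction m with
  | nil => exact measurable_id
  | cons a m ih => exact (measurable_prependShift a).comp ih


variable (P : Measure (ℕ → Fin N)) [IsProbabilityMeasure P]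
variable (hN0 : N ≠ 0)
variable (hP : ∀ m : List (Fin N), P (cylL m) = ((N : ℝ≥0∞)⁻¹) ^ m.length)

include hN0 hP

lemma map_prependShift_eq (j : Fin N) :
    P.map (prependShift j) = (N : ℝ≥0∞) • P.restrict (cylL [j]) := by
  have hNc : (N : ℝ≥0∞) ≠ 0 := by exact_mod_cast hN0
  have hNt : (N : ℝ≥0∞) ≠ ⊤ := natCast_ne_top N
  have hmul : (N : ℝ≥0∞) * (N : ℝ≥0∞)⁻¹ = 1 := ENNReal.mul_inv_cancel hNc hNt
  have hone : ((N : ℝ≥0∞)) * P (cylL [j]) = 1 := by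
    rw [hP [j]]; simpa using hmul
  haveI := Measure.isProbabilityMeasure_map (μ := P) (measurable_prependShift j).aemeasurable
  refine ext_of_generate_finite (cylC N) generateFrom_cylC isPiSystem_cylC ?_ ?_
  · rintro s ⟨m, rfl⟩
    rw [Measure.map_apply (measurable_prependShift j) (measurableSet_cylL m),
        Measure.smul_apply, Measure.restrict_apply (measurableSet_cylL m), smul_eq_mul]
    cases m with
    | nil =>
        rw [preimage_prependShift_cylL_nil, cylL_nil, Set.univ_inter, measure_univ, hone]
    | cons a m' =>
        rw [preimage_prependShift_cylL_cons, cylL_cons_inter]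
        split_ifs with h
        · rw [hP, hP]
          simp only [List.length_cons]
          rw [pow_succ, ← mul_assoc, mul_comm ((N:ℝ≥0∞)) _, mul_assoc, hmul, mul_one]
        · simp
  · rw [Measure.smul_apply, Measure.restrict_apply MeasurableSet.univ, Set.univ_inter,
      measure_univ, smul_eq_mul, hone]

lemma restrict_map_prependShift (j : Fin N) (m : List (Fin N)) :
    (P.restrict (cylL m)).map (prependShift j) = (N : ℝ≥0∞) • P.restrict (cylL (j :: m)) := by
  ext B hB
  have hmB : MeasurableSet (B ∩ cylL (j :: m)) := hB.inter (measurableSet_cylL _)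
  have h1 : prependShift j ⁻¹' B ∩ cylL m = prependShift j ⁻¹' (B ∩ cylL (j :: m)) := by
    rw [Set.preimage_inter, preimage_prependShift_cylL_cons, if_pos rfl]
  have h2 : cylL (j :: m) ∩ cylL [j] = cylL (j :: m) := by
    rw [cylL_cons_inter, if_pos rfl]
  rw [Measure.map_apply (measurable_prependShift j) hB,
      Measure.restrict_apply ((measurable_prependShift j) hB), h1,
      ← Measure.map_apply (measurable_prependShift j) hmB,
      map_prependShift_eq P hN0 hP j,
      Measure.smul_apply, Measure.restrict_apply hmB, Set.inter_assoc, h2,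
      Measure.smul_apply, Measure.restrict_apply hB]

lemma map_prependList_eq (m : List (Fin N)) :
    P.map (prependList m) = ((N : ℝ≥0∞) ^ m.length) • P.restrict (cylL m) := by
  induction m with
  | nil =>
      rw [show prependList ([] : List (Fin N)) = fun ω => ω from rfl, Measure.map_id']
      simp [cylL_nil]
  | cons a m ih =>
      have hc : prependList (a :: m) = prependShift a ∘ prependList m := rfl
      rw [hc, ← Measure.map_map (measurable_prependShift a) (measurable_prependList m), ih,
        Measure.map_smul, restrict_map_prependShift P hN0 hP a m, smul_smul,
        List.length_cons, pow_succ]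

lemma map_prependList_ac (m : List (Fin N)) : P.map (prependList m) ≪ P := by
  rw [map_prependList_eq P hN0 hP m]
  intro s hs
  have h1 : P.restrict (cylL m) s = 0 :=
    le_antisymm (le_trans (Measure.restrict_le_self s) hs.le) zero_le
  rw [Measure.smul_apply, h1, smul_eq_mul, mul_zero]

lemma comp_prependList_ae {g h : (ℕ → Fin N) → ℝ} (m : List (Fin N)) (hgh : g =ᵐ[P] h) :
    (fun ω => g (prependList m ω)) =ᵐ[P] (fun ω => h (prependList m ω)) :=
  ae_of_ae_map (measurable_prependList m).aemeasurable
    (hgh.filter_mono (map_prependList_ac P hN0 hP m).ae_le)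

end Measures

end Stmt19Aux


open RealInnerProductSpace in
open Stmt19Aux in
theorem stmt19 {Y : Type*} [MetricSpace Y] [CompleteSpace Y] [Nonempty Y]
    [MeasurableSpace Y] [BorelSpace Y]
    (N : ℕ) (hN : 2 ≤ N) (τ : Fin N → Y → Y) (c : Fin N → ℝ)
    (hc : ∀ i, c i ∈ Set.Ioo (0 : ℝ) 1)
    (hτ : ∀ i x y, dist (τ i x) (τ i y) ≤ c i * dist x y)
    (P : Measure (ℕ → Fin N)) [IsProbabilityMeasure P]
    (hP : ∀ (n : ℕ) (w : Fin n → Fin N),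
      P {ω | ∀ k : Fin n, ω k = w k} = ((N : ℝ≥0∞)⁻¹) ^ n)
    (π : (ℕ → Fin N) → Y) (hπcont : Continuous π)
    (hπeq : ∀ j : Fin N, π ∘ prependShift j = τ j ∘ π)
    (μ : Measure Y) (hμ : μ = P.map π)
    (F : Fin N → (Lp ℝ 2 μ →L[ℝ] Lp ℝ 2 μ))
    (hF : ∀ (i : Fin N) (f : Lp ℝ 2 μ),
      (F i f : Y → ℝ) =ᵐ[μ] fun y => (Real.sqrt N)⁻¹ * f (τ i y))
    (T : Fin N → (Lp ℝ 2 P →L[ℝ] Lp ℝ 2 P))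
    (hT : ∀ (i : Fin N) (ψ : Lp ℝ 2 P),
      (T i ψ : (ℕ → Fin N) → ℝ) =ᵐ[P] fun ω => (Real.sqrt N)⁻¹ * ψ (prependShift i ω))
    (V : Lp ℝ 2 μ →ₗ[ℝ] Lp ℝ 2 P)
    (hV : ∀ f : Lp ℝ 2 μ, (V f : (ℕ → Fin N) → ℝ) =ᵐ[P] fun ω => f (π ω)) :
    (∀ f : Lp ℝ 2 μ, ‖V f‖ = ‖f‖) ∧
    (∀ (i : Fin N) (f : Lp ℝ 2 μ), V (F i f) = T i (V f)) ∧
    (Submodule.span ℝ {ψ : Lp ℝ 2 P | ∃ (n : ℕ) (w : Fin n → Fin N) (f : Lp ℝ 2 μ),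
        ψ = (List.ofFn fun j => ContinuousLinearMap.adjoint (T (w j))).prod
              (V f)}).topologicalClosure = ⊤ := by
  have hN0 : N ≠ 0 := by omega
  have hP' : ∀ m : List (Fin N), P (cylL m) = ((N : ℝ≥0∞)⁻¹) ^ m.length :=
    fun m => hP m.length m.get
  have hπm : Measurable π := hπcont.measurable
  subst hμ
  -- transfer a.e. statements on μ to a.e. statements on P through π
  have hmap : ∀ {p : Y → Prop}, (∀ᵐ y ∂(P.map π), p y) → ∀ᵐ ω ∂P, p (π ω) :=
    fun hp => ae_of_ae_map hπm.aemeasurable hp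
  refine ⟨?_, ?_, ?_⟩
  · -- (a) V is isometric
    intro f
    rw [Lp.norm_def, Lp.norm_def]
    have h1 : eLpNorm (⇑(V f)) 2 P = eLpNorm (⇑f ∘ π) 2 P := eLpNorm_congr_ae (hV f)
    have h2 : eLpNorm (⇑f) 2 (P.map π) = eLpNorm (⇑f ∘ π) 2 P :=
      eLpNorm_map_measure (Lp.aestronglyMeasurable f) hπm.aemeasurable
    rw [h1, h2]
  · -- (b) intertwining
    intro i f
    apply Lp.ext
    have e2 : ∀ᵐ ω ∂P, (F i f : Y → ℝ) (π ω) = (Real.sqrt N)⁻¹ * f (τ i (π ω)) := hmap (hF i f)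
    have e3 : ∀ ω, τ i (π ω) = π (prependShift i ω) := fun ω => (congrFun (hπeq i) ω).symm
    have e5 : (fun ω => (V f : (ℕ → Fin N) → ℝ) (prependShift i ω))
        =ᵐ[P] fun ω => (f : Y → ℝ) (π (prependShift i ω)) :=
      comp_prependList_ae P hN0 hP' [i] (hV f)
    have left : ⇑(V (F i f)) =ᵐ[P] fun ω => (Real.sqrt N)⁻¹ * f (π (prependShift i ω)) := by
      filter_upwards [hV (F i f), e2] with ω h1 h2
      rw [h1, h2, e3]
    have right : ⇑(T i (V f)) =ᵐ[P] fun ω => (Real.sqrt N)⁻¹ * f (π (prependShift i ω)) := by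
      filter_upwards [hT i (V f), e5] with ω h1 h2
      rw [h1, h2]
    exact left.trans right.symm
  · -- (c) minimality
    haveI hμprob : IsProbabilityMeasure (P.map π) := Measure.isProbabilityMeasure_map hπm.aemeasurable
    rw [Submodule.topologicalClosure_eq_top_iff, Submodule.eq_bot_iff]
    intro ψ hψ
    -- orthogonality against all generators, list form
    have horth : ∀ (l : List (Fin N)) (f : Lp ℝ 2 (P.map π)),
        ⟪(l.map fun i => ContinuousLinearMap.adjoint (T i)).prod (V f), ψ⟫ = 0 := by
      intro l f
      refine (Submodule.mem_orthogonal _ ψ).mp hψ _ (Submodule.subset_span ?_)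
      refine ⟨l.length, l.get, f, ?_⟩
      have h1 : (List.ofFn fun j => ContinuousLinearMap.adjoint (T (l.get j)))
          = List.ofFn ((fun i => ContinuousLinearMap.adjoint (T i)) ∘ l.get) := rfl
      rw [h1, ← List.map_ofFn, List.ofFn_get]
    -- adjoint transfer
    have hadj : ∀ (l : List (Fin N)) (x : Lp ℝ 2 (P.map π)) (y : Lp ℝ 2 P),
        ⟪(l.map fun i => ContinuousLinearMap.adjoint (T i)).prod (V x), y⟫
          = ⟪V x, ((l.map T).reverse).prod y⟫ := by
      intro l
      induction l with
      | nil => intro x y; simp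
      | cons a l ih =>
          intro x y
          rw [List.map_cons, List.prod_cons, ContinuousLinearMap.mul_apply,
            ContinuousLinearMap.adjoint_inner_left, ih x ((T a) y),
            List.map_cons, List.reverse_cons, List.prod_append, List.prod_singleton,
            ContinuousLinearMap.mul_apply]
    have horthT : ∀ (l : List (Fin N)) (f : Lp ℝ 2 (P.map π)),
        ⟪V f, (l.map T).prod ψ⟫ = 0 := by
      intro l f
      have h := horth l.reverse f
      rw [hadj l.reverse f ψ, List.map_reverse, List.reverse_reverse] at h
      exact h
    -- pointwise formula for products of the Tᵢ
    have hTl : ∀ (l : List (Fin N)) (φ : Lp ℝ 2 P),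
        ⇑((l.map T).prod φ) =ᵐ[P]
          fun ω => ((Real.sqrt N)⁻¹) ^ l.length * φ (prependList l.reverse ω) := by
      intro l
      induction l with
      | nil =>
          intro φ
          simp only [List.map_nil, List.prod_nil, ContinuousLinearMap.one_apply,
            List.length_nil, pow_zero, one_mul, List.reverse_nil]
          exact Filter.EventuallyEq.rfl
      | cons a l ih =>
          intro φ
          have h1 : ⇑((((a :: l).map T).prod) φ)
              =ᵐ[P] fun ω => (Real.sqrt N)⁻¹ * ((l.map T).prod φ) (prependShift a ω) := by
            rw [List.map_cons, List.prod_cons, ContinuousLinearMap.mul_apply]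
            exact hT a _
          have h2 : (fun ω => ((l.map T).prod φ : (ℕ → Fin N) → ℝ) (prependShift a ω))
              =ᵐ[P] fun ω => ((Real.sqrt N)⁻¹) ^ l.length
                * φ (prependList l.reverse (prependShift a ω)) :=
            comp_prependList_ae P hN0 hP' [a] (ih φ)
          have h3 : ∀ ω, prependList l.reverse (prependShift a ω)
              = prependList (a :: l).reverse ω := by
            intro ω
            rw [List.reverse_cons]
            show _ = List.foldr prependShift ω (l.reverse ++ [a])
            rw [List.foldr_append]
            rfl
          filter_upwards [h1, h2] with ω e1 e2
          rw [e1, e2, h3, List.length_cons, pow_succ', mul_assoc]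
    -- the constant-one function in L²(μ)
    set f₁ : Lp ℝ 2 (P.map π) :=
      indicatorConstLp 2 MeasurableSet.univ (measure_ne_top _ _) (1:ℝ) with hf₁def
    have hVf₁ : ⇑(V f₁) =ᵐ[P] fun _ => (1:ℝ) := by
      have hf₁ : ⇑f₁ =ᵐ[P.map π] fun _ => (1:ℝ) := by
        refine indicatorConstLp_coeFn.trans ?_
        rw [Set.indicator_univ]
      exact (hV f₁).trans (hmap hf₁)
    -- integrals over cylinders vanish
    have hsqrt : ((Real.sqrt N)⁻¹ : ℝ) ≠ 0 := by
      have h0 : (0:ℝ) < N := by exact_mod_cast Nat.pos_of_ne_zero hN0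
      exact inv_ne_zero (ne_of_gt (Real.sqrt_pos.mpr h0))
    have hcylint : ∀ m : List (Fin N), ∫ ω in cylL m, (ψ : (ℕ → Fin N) → ℝ) ω ∂P = 0 := by
      intro m
      have h0 := horthT m.reverse f₁
      rw [L2.inner_def] at h0
      simp only [RCLike.inner_apply, starRingEnd_apply, star_trivial] at h0
      have hT' := hTl m.reverse ψ
      rw [List.reverse_reverse] at hT'
      have hi : ∫ a, ((m.reverse.map T).prod ψ : (ℕ → Fin N) → ℝ) a
            * (V f₁ : (ℕ → Fin N) → ℝ) a ∂P
          = ∫ a, ((Real.sqrt N)⁻¹) ^ m.reverse.length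
            * (ψ : (ℕ → Fin N) → ℝ) (prependList m a) ∂P := by
        refine integral_congr_ae ?_
        filter_upwards [hVf₁, hT'] with ω e1 e2
        rw [e1, e2, mul_one]
      rw [hi, integral_const_mul] at h0
      have hc0 : (((Real.sqrt N)⁻¹ : ℝ)) ^ m.reverse.length ≠ 0 := pow_ne_zero _ hsqrt
      have hint0 : ∫ ω, (ψ : (ℕ → Fin N) → ℝ) (prependList m ω) ∂P = 0 :=
        (mul_eq_zero.mp h0).resolve_left hc0
      have hasm : AEStronglyMeasurable (⇑ψ) (P.map (prependList m)) :=
        (Lp.aestronglyMeasurable ψ).mono_ac (map_prependList_ac P hN0 hP' m)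
      have hmeq : ∫ ω, (ψ : (ℕ → Fin N) → ℝ) (prependList m ω) ∂P
          = ((N:ℝ≥0∞) ^ m.length).toReal * ∫ ω in cylL m, (ψ : (ℕ → Fin N) → ℝ) ω ∂P := by
        rw [← integral_map (measurable_prependList m).aemeasurable hasm,
          map_prependList_eq P hN0 hP' m, integral_smul_measure, smul_eq_mul]
      rw [hmeq] at hint0
      have hc1 : ((N:ℝ≥0∞) ^ m.length).toReal ≠ 0 := by
        have he : ((N:ℝ≥0∞) ^ m.length).toReal = (N:ℝ) ^ m.length := by
          simp [ENNReal.toReal_pow]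
        rw [he]
        exact pow_ne_zero _ (by exact_mod_cast hN0)
      exact (mul_eq_zero.mp hint0).resolve_left hc1
    -- conclude ψ = 0 a.e.
    have hψint : Integrable (⇑ψ) P := (Lp.memLp ψ).integrable (by norm_num)
    have hg₁m : AEMeasurable (fun ω => ENNReal.ofReal ((ψ : (ℕ → Fin N) → ℝ) ω)) P :=
      ENNReal.measurable_ofReal.comp_aemeasurable (Lp.aestronglyMeasurable ψ).aemeasurable
    have hg₂m : AEMeasurable (fun ω => ENNReal.ofReal (-(ψ : (ℕ → Fin N) → ℝ) ω)) P :=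
      ENNReal.measurable_ofReal.comp_aemeasurable (Lp.aestronglyMeasurable ψ).aemeasurable.neg
    have hbound : ∀ (s : Set (ℕ → Fin N)) (g : (ℕ → Fin N) → ℝ),
        (∀ ω, |g ω| = |(ψ : (ℕ → Fin N) → ℝ) ω|) →
        ∫⁻ ω in s, ENNReal.ofReal (g ω) ∂P ≠ ⊤ := by
      intro s g hg
      have hle : ∫⁻ ω in s, ENNReal.ofReal (g ω) ∂P
          ≤ ∫⁻ ω, ‖(ψ : (ℕ → Fin N) → ℝ) ω‖₊ ∂P := by
        refine le_trans (setLIntegral_le_lintegral _ _) (lintegral_mono fun ω => ?_)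
        rw [← enorm_eq_nnnorm, Real.enorm_eq_ofReal_abs, ← hg ω]
        exact ENNReal.ofReal_le_ofReal (le_abs_self _)
      exact ne_of_lt (lt_of_le_of_lt hle hψint.2)
    have hwd : ∀ m : List (Fin N),
        (P.withDensity fun ω => ENNReal.ofReal ((ψ : (ℕ → Fin N) → ℝ) ω)) (cylL m)
          = (P.withDensity fun ω => ENNReal.ofReal (-(ψ : (ℕ → Fin N) → ℝ) ω)) (cylL m) := by
      intro m
      have hs := measurableSet_cylL (N := N) m
      have hrint : Integrable (⇑ψ) (P.restrict (cylL m)) := hψint.restrict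
      have hrepr := integral_eq_lintegral_pos_part_sub_lintegral_neg_part hrint
      rw [hcylint m] at hrepr
      rw [withDensity_apply _ hs, withDensity_apply _ hs]
      have h1t := hbound (cylL m) _ (fun ω => rfl)
      have h2t := hbound (cylL m) (fun ω => -(ψ : (ℕ → Fin N) → ℝ) ω) (fun ω => abs_neg _)
      exact (ENNReal.toReal_eq_toReal_iff' h1t h2t).mp (sub_eq_zero.mp hrepr.symm)
    have hmeas_eq : (P.withDensity fun ω => ENNReal.ofReal ((ψ : (ℕ → Fin N) → ℝ) ω))
        = P.withDensity fun ω => ENNReal.ofReal (-(ψ : (ℕ → Fin N) → ℝ) ω) := by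
      haveI : IsFiniteMeasure
          (P.withDensity fun ω => ENNReal.ofReal ((ψ : (ℕ → Fin N) → ℝ) ω)) :=
        isFiniteMeasure_withDensity_ofReal hψint.2
      refine ext_of_generate_finite (cylC N) generateFrom_cylC isPiSystem_cylC ?_ ?_
      · rintro s ⟨m, rfl⟩
        exact hwd m
      · have := hwd []
        rwa [cylL_nil] at this
    have hfin : ∫⁻ ω, ENNReal.ofReal ((ψ : (ℕ → Fin N) → ℝ) ω) ∂P ≠ ⊤ := by
      have := hbound Set.univ _ (fun ω => rfl)
      rwa [Measure.restrict_univ] at this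
    have hae := (withDensity_eq_iff hg₁m hg₂m hfin).mp hmeas_eq
    have hψ0 : ⇑ψ =ᵐ[P] 0 := by
      filter_upwards [hae] with ω h
      show (ψ : (ℕ → Fin N) → ℝ) ω = 0
      by_cases h0 : 0 ≤ (ψ : (ℕ → Fin N) → ℝ) ω
      · have h2 : ENNReal.ofReal (-(ψ : (ℕ → Fin N) → ℝ) ω) = 0 :=
          ENNReal.ofReal_of_nonpos (neg_nonpos.mpr h0)
        have h1 : ENNReal.ofReal ((ψ : (ℕ → Fin N) → ℝ) ω) = 0 := h.trans h2
        exact le_antisymm (ENNReal.ofReal_eq_zero.mp h1) h0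
      · push_neg at h0
        have h1 : ENNReal.ofReal ((ψ : (ℕ → Fin N) → ℝ) ω) = 0 :=
          ENNReal.ofReal_of_nonpos h0.le
        have h2 : ENNReal.ofReal (-(ψ : (ℕ → Fin N) → ℝ) ω) = 0 := h.symm.trans h1
        have := ENNReal.ofReal_eq_zero.mp h2
        linarith [neg_nonpos.mp this]
    exact Lp.ext (hψ0.trans (Lp.coeFn_zero ℝ 2 P).symm)
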